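/- Suppose r > 0, σ > 0, K > 0, δ > 0 and k* > K. Let v be given on (K, k*) by v(x) := (k* − K)(k*/x)^κ·((K/x)^{−λ/σ} − (K/x)^{λ/σ})/D + δ(K/x)^κ·((k*/x)^{λ/σ} − (k*/x)^{−λ/σ})/D with D := (k*/K)^{λ/σ} − (k*/K)^{−λ/σ}, and let w(x) := δ(x/K)^{λ/σ − κ} on (0, K]. Then the right-hand derivative of v at K is at least the left-hand derivative w′(K) = (λ/σ − κ)δ/K if and only if δ ≤ (k* − K)(K/k*)^{λ/σ − κ}. Equivalently, the derivative jump v′(K⁺) − w′(K⁻) = (2(k* − K)(k*/K)^{κ+λ/σ}λ − 2(k*/K)^{2λ/σ}δλ)/((−1 + (k*/K)^{2λ/σ})Kσ) is ≥ 0 precisely when δ ≤ (k* − K)(K/k*)^{λ/σ − κ}. -/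

import Mathlib

noncomputable section

set_option maxHeartbeats 1000000

private lemma hasDerivAt_c_div_rpow (c p x : ℝ) (hc : 0 < c) (hx : 0 < x) :
    HasDerivAt (fun y => (c / y) ^ p) (-(p * (c / x) ^ p) / x) x := by
  have h0 : HasDerivAt (fun y : ℝ => c / y) (c * (-(x ^ 2)⁻¹)) x := by
    simpa [div_eq_mul_inv] using (hasDerivAt_inv hx.ne').const_mul c
  have h1 : c / x ≠ 0 := by positivity
  have h2 := h0.rpow_const (p := p) (Or.inl h1)
  convert h2 using 1
  rw [show p - 1 = p + (-1) by ring, Real.rpow_add (by positivity), Real.rpow_neg_one]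
  field_simp

/-- The right-hand derivative of the middle-region candidate `v` at the strike `K` is at least
the left-hand derivative `w′(K) = (λ/σ − κ)δ/K` of `w(x) = δ(x/K)^{λ/σ−κ}` if and only if
`δ ≤ (k* − K)(K/k*)^{λ/σ − κ}`; equivalently, the explicit derivative-jump expression is
non-negative precisely under the same condition on `δ`. -/
theorem derivative_jump_at_strike (r d σ K δ : ℝ)
    (hr : 0 < r) (hd : 0 ≤ d) (hσ : 0 < σ) (hK : 0 < K) (hδ : 0 < δ)
    (lam κ : ℝ)
    (hlam : lam = Real.sqrt (2 * r + ((r - d - σ ^ 2 / 2) / σ) ^ 2))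
    (hκ : κ = (r - d - σ ^ 2 / 2) / σ ^ 2)
    (k : ℝ) (hk : K < k)
    (D : ℝ) (hD : D = (k / K) ^ (lam / σ) - (k / K) ^ (-(lam / σ)))
    (v w : ℝ → ℝ)
    (hv : v = fun x =>
      (k - K) * (k / x) ^ κ * (((K / x) ^ (-(lam / σ)) - (K / x) ^ (lam / σ)) / D) +
        δ * (K / x) ^ κ * (((k / x) ^ (lam / σ) - (k / x) ^ (-(lam / σ))) / D))
    (hw : w = fun x => δ * (x / K) ^ (lam / σ - κ)) :
    derivWithin w (Set.Iic K) K = (lam / σ - κ) * δ / K ∧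
    (derivWithin v (Set.Ioi K) K ≥ (lam / σ - κ) * δ / K ↔
      δ ≤ (k - K) * (K / k) ^ (lam / σ - κ)) ∧
    (derivWithin v (Set.Ioi K) K - derivWithin w (Set.Iic K) K =
      (2 * (k - K) * (k / K) ^ (κ + lam / σ) * lam - 2 * (k / K) ^ (2 * lam / σ) * δ * lam) /
        ((-1 + (k / K) ^ (2 * lam / σ)) * K * σ)) ∧
    ((2 * (k - K) * (k / K) ^ (κ + lam / σ) * lam - 2 * (k / K) ^ (2 * lam / σ) * δ * lam) /
        ((-1 + (k / K) ^ (2 * lam / σ)) * K * σ) ≥ 0 ↔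
      δ ≤ (k - K) * (K / k) ^ (lam / σ - κ)) := by
  have hk0 : 0 < k := hK.trans hk
  have hq0 : 0 < k / K := by positivity
  have hq1 : 1 < k / K := (one_lt_div hK).mpr hk
  have hlam0 : 0 < lam := by
    rw [hlam]; exact Real.sqrt_pos.mpr (by positivity)
  have hb0 : 0 < lam / σ := by positivity
  set X := (k / K) ^ (lam / σ) with hXdef
  set Y := (k / K) ^ κ with hYdef
  have hX1 : 1 < X := Real.one_lt_rpow_iff_of_pos hq0 |>.mpr (Or.inl ⟨hq1, hb0⟩)
  have hX0 : 0 < X := lt_trans one_pos hX1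
  have hY0 : 0 < Y := Real.rpow_pos_of_pos hq0 κ
  have hXneg : (k / K) ^ (-(lam / σ)) = X⁻¹ := Real.rpow_neg hq0.le _
  have hD' : D = X - X⁻¹ := by rw [hD, hXneg]
  have hD0 : 0 < D := by
    rw [hD']
    have : X⁻¹ < 1 := inv_lt_one_of_one_lt₀ hX1
    linarith
  -- w derivative
  have hw0 : HasDerivAt w ((lam / σ - κ) * δ / K) K := by
    rw [hw]
    have h0 : HasDerivAt (fun y : ℝ => y / K) (1 / K) K := (hasDerivAt_id K).div_const K
    have h1 := (h0.rpow_const (p := lam / σ - κ) (Or.inl (by positivity : K / K ≠ 0))).const_mul δ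
    refine h1.congr_deriv ?_
    rw [div_self hK.ne', Real.one_rpow]
    ring
  have hwK : derivWithin w (Set.Iic K) K = (lam / σ - κ) * δ / K :=
    hw0.hasDerivWithinAt.derivWithin (uniqueDiffOn_Iic K K (Set.mem_Iic.mpr le_rfl))
  -- v derivative
  have VKdef : HasDerivAt v
      ((k - K) * Y * (2 * (lam / σ)) / (K * D) - δ * κ * (X - X⁻¹) / (K * D)
        - δ * (lam / σ) * (X + X⁻¹) / (K * D)) K := by
    rw [hv]
    have h1 : HasDerivAt (fun x => (k / x) ^ κ) (-(κ * (k / K) ^ κ) / K) K :=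
      hasDerivAt_c_div_rpow k κ K hk0 hK
    have h2 : HasDerivAt (fun x => (K / x) ^ (-(lam / σ)) - (K / x) ^ (lam / σ))
        (-(-(lam / σ) * (K / K) ^ (-(lam / σ))) / K - -(lam / σ * (K / K) ^ (lam / σ)) / K) K :=
      (hasDerivAt_c_div_rpow K (-(lam / σ)) K hK hK).sub (hasDerivAt_c_div_rpow K (lam / σ) K hK hK)
    have h3 : HasDerivAt (fun x => (K / x) ^ κ) (-(κ * (K / K) ^ κ) / K) K :=
      hasDerivAt_c_div_rpow K κ K hK hK
    have h4 : HasDerivAt (fun x => (k / x) ^ (lam / σ) - (k / x) ^ (-(lam / σ)))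
        (-(lam / σ * (k / K) ^ (lam / σ)) / K - -(-(lam / σ) * (k / K) ^ (-(lam / σ))) / K) K :=
      (hasDerivAt_c_div_rpow k (lam / σ) K hk0 hK).sub (hasDerivAt_c_div_rpow k (-(lam / σ)) K hk0 hK)
    have hA := ((h1.const_mul (k - K)).mul (h2.div_const D)).add
      ((h3.const_mul δ).mul (h4.div_const D))
    refine hA.congr_deriv ?_
    rw [div_self hK.ne', Real.one_rpow, Real.one_rpow, Real.one_rpow]
    rw [hXneg, ← hXdef, hYdef]
    field_simp
    ring
  have hvK : derivWithin v (Set.Ioi K) K =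
      (k - K) * Y * (2 * (lam / σ)) / (K * D) - δ * κ * (X - X⁻¹) / (K * D)
        - δ * (lam / σ) * (X + X⁻¹) / (K * D) :=
    VKdef.hasDerivWithinAt.derivWithin (uniqueDiffWithinAt_Ioi K)
  -- rpow rewrites for the targets
  have hadd : (k / K) ^ (κ + lam / σ) = Y * X := Real.rpow_add hq0 _ _
  have htwo : (k / K) ^ (2 * lam / σ) = X * X := by
    rw [show 2 * lam / σ = lam / σ + lam / σ by ring, Real.rpow_add hq0]
  have hKk : (K / k) ^ (lam / σ - κ) = Y / X := by
    rw [show K / k = (k / K)⁻¹ from (inv_div k K).symm, Real.inv_rpow hq0.le,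
      Real.rpow_sub hq0, ← hXdef, ← hYdef, inv_div]
  -- part 3 equality
  have h3 : derivWithin v (Set.Ioi K) K - derivWithin w (Set.Iic K) K =
      (2 * (k - K) * (k / K) ^ (κ + lam / σ) * lam - 2 * (k / K) ^ (2 * lam / σ) * δ * lam) /
        ((-1 + (k / K) ^ (2 * lam / σ)) * K * σ) := by
    rw [hvK, hwK, hadd, htwo, hD']
    have hp1 : X * X - 1 ≠ 0 := by nlinarith
    have hp2 : X ^ 2 - 1 ≠ 0 := by nlinarith
    have hp3 : -1 + X * X ≠ 0 := by nlinarith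
    have hp4 : -1 + X ^ 2 ≠ 0 := by nlinarith
    have hDne : X - X⁻¹ ≠ 0 := by
      have h1 : X⁻¹ < 1 := inv_lt_one_of_one_lt₀ hX1
      intro h; nlinarith
    field_simp
    ring
  have hden0 : 0 < (-1 + (k / K) ^ (2 * lam / σ)) * K * σ := by
    rw [htwo]
    have : 0 < -1 + X * X := by nlinarith
    positivity
  have h4 : (2 * (k - K) * (k / K) ^ (κ + lam / σ) * lam - 2 * (k / K) ^ (2 * lam / σ) * δ * lam) /
        ((-1 + (k / K) ^ (2 * lam / σ)) * K * σ) ≥ 0 ↔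
      δ ≤ (k - K) * (K / k) ^ (lam / σ - κ) := by
    rw [ge_iff_le, le_div_iff₀ hden0, zero_mul, hadd, htwo, hKk,
      mul_div_assoc' (k - K) Y X, le_div_iff₀ hX0]
    constructor
    · intro h; nlinarith [mul_pos (mul_pos two_pos hlam0) hX0]
    · intro h; nlinarith [mul_pos (mul_pos two_pos hlam0) hX0]
  refine ⟨hwK, ?_, h3, h4⟩
  rw [ge_iff_le, ← sub_nonneg, ← hwK, h3]
  exact h4

end
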